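/- Let f : ℝ_{>0} → ℝ be twice differentiable and satisfy f'(V) + V·(f'(V))² = 0 for all V > 0. Then either f' ≡ 0, or f(V) = -log V + C for some constant C. -/

import Mathlib

theorem stmt16 (f : ℝ → ℝ)
    (hdiff : ∀ V > (0:ℝ), DifferentiableAt ℝ f V)
    (hdiff2 : ∀ V > (0:ℝ), DifferentiableAt ℝ (deriv f) V)
    (hode : ∀ V > (0:ℝ), deriv f V + V * (deriv f V) ^ 2 = 0) :
    (∀ V > (0:ℝ), deriv f V = 0) ∨
    (∃ C : ℝ, ∀ V > (0:ℝ), f V = -Real.log V + C) := by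
  by_cases hz : ∀ V > (0:ℝ), deriv f V = 0
  · exact Or.inl hz
  · right
    push_neg at hz
    obtain ⟨a, ha, hga⟩ := hz
    -- h V = V * deriv f V satisfies h + h^2 = 0, so h ∈ {0, -1}
    set h : ℝ → ℝ := fun V => V * deriv f V with hh
    have hha : h a = -1 := by
      have := hode a ha
      have key : deriv f a * (1 + a * deriv f a) = 0 := by ring_nf; nlinarith [hode a ha]
      rcases mul_eq_zero.1 key with h1 | h2
      · exact absurd h1 hga
      · have : a * deriv f a = -1 := by linarith
        simpa [hh] using this
    -- if deriv f b = 0 for some b > 0, contradiction via IVT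
    have hne : ∀ V > (0:ℝ), deriv f V ≠ 0 := by
      intro b hb hgb
      have hhb : h b = 0 := by simp [hh, hgb]
      have hcont : ContinuousOn h (Set.uIcc a b) := by
        apply ContinuousOn.mul continuousOn_id
        intro x hx
        have hx0 : (0:ℝ) < x := lt_of_lt_of_le (lt_min ha hb) hx.1
        exact ((hdiff2 x hx0).continuousAt).continuousWithinAt
      have hmem : (-1/2 : ℝ) ∈ Set.uIcc (h a) (h b) := by
        rw [hha, hhb]
        constructor <;> simp [min_le_iff, le_max_iff] <;> norm_num
      obtain ⟨c, hc, hhc⟩ := intermediate_value_uIcc hcont hmem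
      have hc0 : (0:ℝ) < c := lt_of_lt_of_le (lt_min ha hb) hc.1
      have := hode c hc0
      have : h c + (h c) ^ 2 = 0 := by
        simp only [hh]
        nlinarith [hode c hc0]
      rw [hhc] at this
      norm_num at this
    -- so deriv f V = -1/V for all V > 0
    have hder : ∀ V > (0:ℝ), deriv f V = -V⁻¹ := by
      intro V hV
      have key : deriv f V * (1 + V * deriv f V) = 0 := by nlinarith [hode V hV]
      rcases mul_eq_zero.1 key with h1 | h2
      · exact absurd h1 (hne V hV)
      · have h3 : V * deriv f V = -1 := by linarith
        field_simp
        linarith [mul_comm V (deriv f V)]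
    -- φ = f + log is constant on Ioi 0
    set φ : ℝ → ℝ := fun V => f V + Real.log V with hφ
    have hφd : ∀ V ∈ Set.Ioi (0:ℝ), HasDerivAt φ 0 V := by
      intro V hV
      have h1 : HasDerivAt f (deriv f V) V := (hdiff V hV).hasDerivAt
      have h2 : HasDerivAt Real.log V⁻¹ V := Real.hasDerivAt_log (ne_of_gt hV)
      have := h1.add h2
      rw [hder V hV] at this
      simp at this
      exact this
    have hconst : ∀ V ∈ Set.Ioi (0:ℝ), φ V = φ 1 := by
      intro V hV
      have hconv : Convex ℝ (Set.Ioi (0:ℝ)) := convex_Ioi 0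
      refine hconv.is_const_of_fderivWithin_eq_zero
        (fun x hx => ((hφd x hx).differentiableAt).differentiableWithinAt) ?_ hV
        (by simp : (1:ℝ) ∈ Set.Ioi (0:ℝ))
      intro x hx
      rw [fderivWithin_of_isOpen isOpen_Ioi hx, (hφd x hx).hasFDerivAt.fderiv]
      ext; simp
    refine ⟨φ 1, fun V hV => ?_⟩
    have := hconst V hV
    simp only [hφ, Real.log_one] at this ⊢
    linarith
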